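/- Every 2-design with d² elements is a SIC-POVM: if unit vectors φ_1,...,φ_{d²} in ℂ^d satisfy Σ_{j,k} |⟨φ_j|φ_k⟩|² = d³ and Σ_{j,k} |⟨φ_j|φ_k⟩|⁴ = 2d³/(d+1), then |⟨φ_j|φ_k⟩|² = 1/(d+1) for all j ≠ k. -/

import Mathlib

open Matrix BigOperators Finset

/-- every 2-design with d² elements is a SIC-POVM: if the first and
second frame potentials attain the values d³ and 2d³/(d+1), then
|⟨φ_j|φ_k⟩|² = 1/(d+1) for all j ≠ k. -/
theorem two_design_is_sic (d : ℕ) (hd : 1 ≤ d)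
    (φ : Fin (d^2) → Fin d → ℂ)
    (hunit : ∀ k, star (φ k) ⬝ᵥ φ k = 1)
    (hpot1 : (∑ j, ∑ k, ‖star (φ j) ⬝ᵥ φ k‖^2 : ℝ) = (d : ℝ)^3)
    (hpot2 : (∑ j, ∑ k, ‖star (φ j) ⬝ᵥ φ k‖^4 : ℝ)
      = 2 * (d : ℝ)^3 / (d + 1)) :
    ∀ j k, j ≠ k → ‖star (φ j) ⬝ᵥ φ k‖^2 = 1 / (d + 1) := by
  set c : ℝ := 1 / (d + 1) with hc
  have hd1 : (d : ℝ) + 1 ≠ 0 := by positivity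
  set x : Fin (d^2) → Fin (d^2) → ℝ :=
    fun j k => ‖star (φ j) ⬝ᵥ φ k‖^2 with hxdef
  have hxdiag : ∀ j, x j j = 1 := by
    intro j; simp [hxdef, hunit j]
  have hsum2 : ∑ j, ∑ k, (x j k)^2 = 2*(d:ℝ)^3/((d:ℝ)+1) := by
    rw [← hpot2]
    refine Finset.sum_congr rfl fun j _ => Finset.sum_congr rfl fun k _ => ?_
    simp only [hxdef]; ring
  have hinner : ∀ j : Fin (d^2),
      ∑ k, ((x j k - c)^2 - if j = k then (1-c)^2 else 0)
      = (∑ k, (x j k)^2) - 2*c*(∑ k, x j k) + ((d:ℝ)^2)*c^2 - (1-c)^2 := by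
    intro j
    rw [Finset.sum_sub_distrib]
    have h1 : ∑ k, (if j = k then (1-c)^2 else 0 : ℝ) = (1-c)^2 := by
      simp
    rw [h1]
    congr 1
    have h2 : ∀ k : Fin (d^2), (x j k - c)^2 = (x j k)^2 - 2*c*(x j k) + c^2 := by
      intro k; ring
    simp only [h2]
    rw [Finset.sum_add_distrib, Finset.sum_sub_distrib, Finset.sum_const,
      Finset.card_univ, Fintype.card_fin, nsmul_eq_mul, ← Finset.mul_sum]
    push_cast
    ring
  have hsum1 : ∑ j, ∑ k, x j k = (d:ℝ)^3 := hpot1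
  have hF : ∑ j, ∑ k, ((x j k - c)^2 - if j = k then (1-c)^2 else 0) = 0 := by
    simp only [hinner]
    rw [Finset.sum_sub_distrib, Finset.sum_add_distrib, Finset.sum_sub_distrib, hsum2,
      ← Finset.mul_sum, hsum1, Finset.sum_const, Finset.sum_const,
      Finset.card_univ, Fintype.card_fin, nsmul_eq_mul, nsmul_eq_mul]
    push_cast
    rw [hc]
    field_simp
    ring
  have hnn : ∀ j ∈ Finset.univ, (0:ℝ) ≤
      ∑ k, ((x j k - c)^2 - if j = k then (1-c)^2 else 0) := by
    intro j _
    apply Finset.sum_nonneg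
    intro k _
    by_cases h : j = k
    · subst h
      simp [hxdiag j]
    · simp [h, sq_nonneg]
  have hzero := (Finset.sum_eq_zero_iff_of_nonneg hnn).mp hF
  intro j k hjk
  have hj := hzero j (Finset.mem_univ j)
  have hnn2 : ∀ k ∈ Finset.univ, (0:ℝ) ≤
      ((x j k - c)^2 - if j = k then (1-c)^2 else 0) := by
    intro k _
    by_cases h : j = k
    · subst h; simp [hxdiag j]
    · simp [h, sq_nonneg]
  have hk := (Finset.sum_eq_zero_iff_of_nonneg hnn2).mp hj k (Finset.mem_univ k)
  rw [if_neg hjk] at hk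
  have : (x j k - c)^2 = 0 := by linarith
  have := pow_eq_zero_iff (n := 2) (by norm_num) |>.mp this
  have hx : x j k = c := by linarith [sub_eq_zero.mp this]
  simpa [hxdef, hc] using hx
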